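/- Let a, b, d ∈ ℝ with a, b, d ≥ 0 and a + 2b + d = 1, and let P be the 4×4 real matrix with rows (a,b,b,d), (b,a,d,b), (b,d,a,b), (d,b,b,a) (a Kimura 2-parameter Markov matrix). Then there exist β, δ ≥ 0 such that P = exp(Q), where Q is the 4×4 matrix with rows (α,β,β,δ), (β,α,δ,β), (β,δ,α,β), (δ,β,β,α) and α = −(2β+δ) (a Kimura 2-parameter rate matrix), if and only if a − d > 0 and (a − d)² ≤ a − 2b + d ≤ 1. -/

import Mathlib

open Matrix

lemma tail_fin_const {α : Type*} {n : ℕ} (a : α) :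
    (vecTail fun _ : Fin (n + 1) => a) = fun _ => a := rfl

lemma one_fin_four : (1 : Matrix (Fin 4) (Fin 4) ℝ) =
    !![1,0,0,0; 0,1,0,0; 0,0,1,0; 0,0,0,1] := by
  ext i j; fin_cases i <;> fin_cases j <;> rfl

noncomputable def Hm : Matrix (Fin 4) (Fin 4) ℝ :=
  !![1,1,1,1; 1,1,-1,-1; 1,-1,1,-1; 1,-1,-1,1]

noncomputable def Hi : Matrix (Fin 4) (Fin 4) ℝ :=
  !![1/4,1/4,1/4,1/4; 1/4,1/4,-(1/4),-(1/4); 1/4,-(1/4),1/4,-(1/4); 1/4,-(1/4),-(1/4),1/4]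

lemma Hm_mul_inv : Hm * Hi = 1 := by
  rw [one_fin_four]
  ext i j
  fin_cases i <;> fin_cases j <;>
    simp [Hm, Hi, Matrix.mul_apply, Fin.sum_univ_four, tail_fin_const] <;> norm_num

lemma Hm_inv_mul : Hi * Hm = 1 := by
  rw [one_fin_four]
  ext i j
  fin_cases i <;> fin_cases j <;>
    simp [Hm, Hi, Matrix.mul_apply, Fin.sum_univ_four, tail_fin_const] <;> norm_num

lemma Hm_isUnit : IsUnit Hm := ⟨⟨Hm, Hi, Hm_mul_inv, Hm_inv_mul⟩, rfl⟩

lemma Hm_inv : Hm⁻¹ = Hi := Matrix.inv_eq_right_inv Hm_mul_inv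

lemma diag_fin_four (w x y z : ℝ) : Matrix.diagonal ![w, x, y, z] =
    !![w,0,0,0; 0,x,0,0; 0,0,y,0; 0,0,0,z] := by
  ext i j; fin_cases i <;> fin_cases j <;> rfl

set_option maxHeartbeats 2000000 in
lemma exp_k2p (α β δ e1 e2 e3 : ℝ)
    (h1 : e1 = Real.exp (α + 2*β + δ)) (h2 : e2 = Real.exp (α - δ))
    (h3 : e3 = Real.exp (α - 2*β + δ)) :
    NormedSpace.exp
        !![α, β, β, δ; β, α, δ, β; β, δ, α, β; δ, β, β, α] =
      !![(e1+2*e2+e3)/4, (e1-e3)/4, (e1-e3)/4, (e1-2*e2+e3)/4;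
         (e1-e3)/4, (e1+2*e2+e3)/4, (e1-2*e2+e3)/4, (e1-e3)/4;
         (e1-e3)/4, (e1-2*e2+e3)/4, (e1+2*e2+e3)/4, (e1-e3)/4;
         (e1-2*e2+e3)/4, (e1-e3)/4, (e1-e3)/4, (e1+2*e2+e3)/4] := by
  have hdecomp : !![α, β, β, δ; β, α, δ, β; β, δ, α, β; δ, β, β, α] =
      Hm * Matrix.diagonal ![α + 2*β + δ, α - δ, α - δ, α - 2*β + δ] * Hm⁻¹ := by
    rw [Hm_inv, diag_fin_four]
    ext i j
    fin_cases i <;> fin_cases j <;>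
      simp [Hm, Hi, Matrix.mul_apply, Fin.sum_univ_four, tail_fin_const] <;> ring
  rw [hdecomp, Matrix.exp_conj _ _ Hm_isUnit, Matrix.exp_diagonal, Hm_inv]
  have hv : NormedSpace.exp ![α + 2*β + δ, α - δ, α - δ, α - 2*β + δ] =
      ![Real.exp (α + 2*β + δ), Real.exp (α - δ), Real.exp (α - δ),
        Real.exp (α - 2*β + δ)] := by
    rw [Pi.exp_def]
    funext i
    fin_cases i <;> simp [← Real.exp_eq_exp_ℝ]
  rw [hv, diag_fin_four]
  ext i j
  fin_cases i <;> fin_cases j <;>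
    simp [Hm, Hi, Matrix.mul_apply, Fin.sum_univ_four, tail_fin_const, h1, h2, h3] <;> ring

/-- A Kimura 2-parameter Markov matrix is K2P embeddable, i.e. the matrix exponential of a
Kimura 2-parameter rate matrix, if and only if `a - d > 0` and
`(a - d)² ≤ a - 2b + d ≤ 1`. -/
theorem k2p_embeddable_iff (a b d : ℝ)
    (ha : 0 ≤ a) (hb : 0 ≤ b) (hd : 0 ≤ d) (hsum : a + 2 * b + d = 1) :
    (∃ β δ : ℝ, 0 ≤ β ∧ 0 ≤ δ ∧
      !![a, b, b, d; b, a, d, b; b, d, a, b; d, b, b, a] =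
        NormedSpace.exp
          !![-(2 * β + δ), β, β, δ;
             β, -(2 * β + δ), δ, β;
             β, δ, -(2 * β + δ), β;
             δ, β, β, -(2 * β + δ)]) ↔
    (0 < a - d ∧ (a - d) ^ 2 ≤ a - 2 * b + d ∧ a - 2 * b + d ≤ 1) := by
  constructor
  · rintro ⟨β, δ, hβ, hδ, heq⟩
    rw [exp_k2p (-(2*β+δ)) β δ 1 (Real.exp (-(2*β+δ) - δ)) (Real.exp (-(2*β+δ) - 2*β + δ))
      (by rw [show -(2*β+δ) + 2*β + δ = 0 by ring, Real.exp_zero]) rfl rfl] at heq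
    have h := fun i j => congrFun (congrFun heq i) j
    have h00 := h 0 0
    have h01 := h 0 1
    have h03 := h 0 3
    simp only [Matrix.cons_val', Matrix.cons_val_zero, Matrix.cons_val_one, Matrix.head_cons,
      Matrix.empty_val', Matrix.cons_val_fin_one, Matrix.head_fin_const,
      Matrix.of_apply, Matrix.cons_val_three, Matrix.head_val', Matrix.tail_cons,
      Matrix.cons_val_two] at h00 h01 h03
    set E2 := Real.exp (-(2*β+δ) - δ) with hE2
    set E3 := Real.exp (-(2*β+δ) - 2*β + δ) with hE3
    have he2 : (0:ℝ) < E2 := Real.exp_pos _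
    refine ⟨by linarith, ?_, ?_⟩
    · have hsq : (a - d) ^ 2 = E2 ^ 2 := by rw [h00, h03]; ring
      have h2x : E2 ^ 2 = Real.exp (2 * (-(2*β+δ) - δ)) := by
        rw [hE2, pow_two, ← Real.exp_add]; congr 1; ring
      have h2b : a - 2*b + d = E3 := by rw [h00, h01, h03]; ring
      rw [hsq, h2x, h2b, hE3]
      exact Real.exp_le_exp.2 (by linarith)
    · have h2b : a - 2*b + d = E3 := by rw [h00, h01, h03]; ring
      rw [h2b, hE3]
      exact Real.exp_le_one_iff.2 (by linarith)
  · rintro ⟨h1, h2, h3⟩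
    have hl2pos : (0:ℝ) < a - d := h1
    have hl3pos : (0:ℝ) < a - 2*b + d := lt_of_lt_of_le (by positivity) h2
    refine ⟨-Real.log (a - 2*b + d) / 4,
      -Real.log (a - d) / 2 - (-Real.log (a - 2*b + d) / 4), ?_, ?_, ?_⟩
    · have := Real.log_nonpos (le_of_lt hl3pos) h3
      linarith
    · have hlog : Real.log ((a - d) ^ 2) ≤ Real.log (a - 2*b + d) :=
        Real.log_le_log (by positivity) h2
      rw [Real.log_pow] at hlog
      push_cast at hlog
      linarith
    · set β := -Real.log (a - 2*b + d) / 4 with hβ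
      set δ := -Real.log (a - d) / 2 - β with hδ
      rw [exp_k2p (-(2*β+δ)) β δ 1 (a - d) (a - 2*b + d)
        (by rw [show -(2*β+δ) + 2*β + δ = 0 by ring, Real.exp_zero])
        (by rw [show -(2*β+δ) - δ = Real.log (a - d) by rw [hδ, hβ]; ring,
              Real.exp_log hl2pos])
        (by rw [show -(2*β+δ) - 2*β + δ = Real.log (a - 2*b + d) by rw [hδ, hβ]; ring,
              Real.exp_log hl3pos])]
      ext i j
      fin_cases i <;> fin_cases j <;> simp <;> linarith
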